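/- Let G1 be a connected δ1-regular graph and G2 be a connected δ2-regular graph on δ1 vertices, and write κ1 = κ(G1) and λi = λ(Gi) for i = 1,2. If G2 is λ'-optimal and either κ1 ≥ λ1−λ2+1 ≥ 2 or κ1 ≥ λ2+1, then G1®G2 is super-λ if and only if λ1 > δ2+1. -/

import Mathlib

open SimpleGraph

section Defs

variable {V : Type*}

/-- The set of edges of `G` with one endpoint in `X` and the other outside `X`. -/
def edgeBoundary (G : SimpleGraph V) (X : Set V) : Set (Sym2 V) :=
  {e | e ∈ G.edgeSet ∧ ∃ u ∈ X, ∃ v ∈ Xᶜ, e = s(u, v)}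

/-- The edge-connectivity `λ(G)`: the minimum number of edges whose removal disconnects `G`. -/
noncomputable def edgeConn (G : SimpleGraph V) : ℕ :=
  sInf {k | ∃ F : Set (Sym2 V), F ⊆ G.edgeSet ∧ F.ncard = k ∧ ¬(G.deleteEdges F).Connected}

/-- `F` is a restricted edge-cut of `G`: removing `F` disconnects `G` and leaves no
isolated vertices. -/
def IsRestrictedEdgeCut (G : SimpleGraph V) (F : Set (Sym2 V)) : Prop :=
  F ⊆ G.edgeSet ∧ ¬(G.deleteEdges F).Connected ∧ ∀ v : V, ∃ w : V, (G.deleteEdges F).Adj v w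

/-- The restricted edge-connectivity `λ'(G)`. -/
noncomputable def restrictedEdgeConn (G : SimpleGraph V) : ℕ :=
  sInf {k | ∃ F : Set (Sym2 V), IsRestrictedEdgeCut G F ∧ F.ncard = k}

/-- The vertex-connectivity `κ(G)`: the minimum size of a set of vertices whose removal
leaves a disconnected graph or a graph with at most one vertex. -/
noncomputable def vertexConn (G : SimpleGraph V) : ℕ :=
  sInf {k | ∃ S : Set V, S.ncard = k ∧
    (¬(G.induce (Sᶜ : Set V)).Connected ∨ (Sᶜ : Set V).ncard ≤ 1)}

/-- The minimum edge-degree `ξ(G) = min {d(u) + d(v) - 2 : uv ∈ E(G)}`. -/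
noncomputable def minEdgeDegree (G : SimpleGraph V) : ℕ :=
  sInf {k | ∃ u v : V, G.Adj u v ∧ (G.neighborSet u).ncard + (G.neighborSet v).ncard - 2 = k}

/-- `G` is `λ'`-optimal if `λ'(G) = ξ(G)`. -/
def LambdaPrimeOptimal (G : SimpleGraph V) : Prop :=
  restrictedEdgeConn G = minEdgeDegree G

/-- The replacement product of `G1` and `G2` with respect to an edge-labelling `ℓ`,
where `ℓ x i` is the other endpoint of the edge of `G1` labelled `i` at the vertex `x`.
Vertices `(x, i)` and `(y, j)` are adjacent iff either `x = y` and `i j ∈ E(G2)`, or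
`x y ∈ E(G1)` and the edge `x y` is labelled `i` at `x` and `j` at `y`. -/
def replacementProduct {V1 V2 : Type*} (G1 : SimpleGraph V1) (G2 : SimpleGraph V2)
    (ℓ : V1 → V2 → V1) : SimpleGraph (V1 × V2) where
  Adj p q := (p.1 = q.1 ∧ G2.Adj p.2 q.2) ∨
    (G1.Adj p.1 q.1 ∧ ℓ p.1 p.2 = q.1 ∧ ℓ q.1 q.2 = p.1)
  symm := by
    constructor
    rintro p q (⟨h1, h2⟩ | ⟨h1, h2, h3⟩)
    · exact Or.inl ⟨h1.symm, h2.symm⟩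
    · exact Or.inr ⟨h1.symm, h3, h2⟩
  loopless := by
    constructor
    rintro p (⟨_, h⟩ | ⟨h, _⟩)
    · exact G2.irrefl h
    · exact G1.irrefl h

/-- `ℓ` is a valid edge-labelling of `G1` for the replacement product:
for each vertex `x`, `ℓ x` is injective and `ℓ x i` is always a neighbour of `x`
(hence `ℓ x` enumerates the neighbours of `x` when `G1` is `|V2|`-regular). -/
def IsRPLabelling {V1 V2 : Type*} (G1 : SimpleGraph V1) (ℓ : V1 → V2 → V1) : Prop :=
  (∀ x, Function.Injective (ℓ x)) ∧ ∀ x i, G1.Adj x (ℓ x i)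

end Defs

/-- A connected graph is super-λ if every minimum edge-cut isolates a vertex;
equivalently, `λ'(G) > λ(G)`. -/
def SuperLambda {V : Type*} (G : SimpleGraph V) : Prop :=
  edgeConn G < restrictedEdgeConn G

namespace RPAux

open Set

section Basics

variable {V : Type*}

lemma sym2_eq_of_fst {v a b : V} (h : s(v, a) = s(v, b)) : a = b := by
  rw [Sym2.eq_iff] at h
  rcases h with ⟨-, h⟩ | ⟨h1, h2⟩
  · exact h
  · exact h2.trans h1

lemma exists_adj_deleteEdges_of_ncard_lt [Finite V] (G : SimpleGraph V)
    (F : Set (Sym2 V)) (v : V) (h : F.ncard < (G.neighborSet v).ncard) :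
    ∃ w, (G.deleteEdges F).Adj v w := by
  by_contra hc
  push_neg at hc
  have hinj : Function.Injective (fun w : V => s(v, w)) := by
    intro a b hab
    exact sym2_eq_of_fst hab
  have h1 : (G.neighborSet v).ncard ≤ F.ncard := by
    calc (G.neighborSet v).ncard
        = ((fun w : V => s(v, w)) '' (G.neighborSet v)).ncard :=
          (ncard_image_of_injective _ hinj).symm
      _ ≤ F.ncard := by
          refine ncard_le_ncard ?_ (toFinite F)
          rintro e ⟨w, hw, rfl⟩
          have := hc w
          rw [SimpleGraph.deleteEdges_adj] at this
          by_contra hns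
          exact this ⟨hw, hns⟩
  omega

lemma edgeConn_le_of_cut (G : SimpleGraph V) {F : Set (Sym2 V)}
    (hF : F ⊆ G.edgeSet) (h : ¬(G.deleteEdges F).Connected) :
    edgeConn G ≤ F.ncard :=
  Nat.sInf_le ⟨F, hF, rfl, h⟩

lemma connected_deleteEdges_of_lt (G : SimpleGraph V) {F : Set (Sym2 V)}
    (hF : F ⊆ G.edgeSet) (h : F.ncard < edgeConn G) :
    (G.deleteEdges F).Connected := by
  by_contra hc
  exact absurd (edgeConn_le_of_cut G hF hc) (by omega)

lemma not_connected_deleteEdges_incidenceSet (G : SimpleGraph V) (v u : V)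
    (hne : u ≠ v) : ¬(G.deleteEdges (G.incidenceSet v)).Connected := by
  intro h
  have hno : ∀ w, ¬(G.deleteEdges (G.incidenceSet v)).Adj v w := by
    intro w hw
    rw [SimpleGraph.deleteEdges_adj] at hw
    exact hw.2 ((G.mem_incidenceSet v w).2 hw.1)
  obtain ⟨p⟩ := h.preconnected v u
  cases p with
  | nil => exact hne rfl
  | cons h p => exact hno _ h

lemma ncard_incidenceSet [Finite V] (G : SimpleGraph V) (v : V) :
    (G.incidenceSet v).ncard = (G.neighborSet v).ncard := by
  classical
  rw [← Nat.card_coe_set_eq, ← Nat.card_coe_set_eq]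
  exact Nat.card_congr (G.incidenceSetEquivNeighborSet v)

lemma edgeConn_le_degree [Finite V] (G : SimpleGraph V) (v u : V) (hne : u ≠ v) :
    edgeConn G ≤ (G.neighborSet v).ncard := by
  rw [← ncard_incidenceSet]
  exact edgeConn_le_of_cut G (G.incidenceSet_subset v)
    (not_connected_deleteEdges_incidenceSet G v u hne)

lemma edgeConn_witness [Finite V] (G : SimpleGraph V) (v u : V) (hne : u ≠ v) :
    ∃ F : Set (Sym2 V), F ⊆ G.edgeSet ∧ F.ncard = edgeConn G ∧
      ¬(G.deleteEdges F).Connected := by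
  have hmem := Nat.sInf_mem (s := {k | ∃ F : Set (Sym2 V), F ⊆ G.edgeSet ∧ F.ncard = k ∧
      ¬(G.deleteEdges F).Connected})
    ⟨(G.incidenceSet v).ncard, G.incidenceSet v, G.incidenceSet_subset v, rfl,
      not_connected_deleteEdges_incidenceSet G v u hne⟩
  obtain ⟨F, h1, h2, h3⟩ := hmem
  exact ⟨F, h1, h2, h3⟩

lemma one_le_edgeConn_of_witness [Finite V] {G : SimpleGraph V} (hG : G.Connected)
    (v u : V) (hne : u ≠ v) : 1 ≤ edgeConn G := by
  obtain ⟨F, h1, h2, h3⟩ := edgeConn_witness G v u hne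
  rcases Nat.eq_zero_or_pos (edgeConn G) with h0 | h
  · rw [h0, ncard_eq_zero (toFinite F)] at h2
    subst h2
    rw [SimpleGraph.deleteEdges_empty] at h3
    exact absurd hG h3
  · exact h

lemma restrictedEdgeConn_le (G : SimpleGraph V) {F : Set (Sym2 V)}
    (h : IsRestrictedEdgeCut G F) : restrictedEdgeConn G ≤ F.ncard :=
  Nat.sInf_le ⟨F, h, rfl⟩

lemma minEdgeDegree_regular (G : SimpleGraph V) {δ : ℕ}
    (hr : ∀ v, (G.neighborSet v).ncard = δ) {u v : V} (huv : G.Adj u v) :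
    minEdgeDegree G = δ + δ - 2 := by
  have hmem := Nat.sInf_mem (s := {k | ∃ u v : V, G.Adj u v ∧
      (G.neighborSet u).ncard + (G.neighborSet v).ncard - 2 = k})
    ⟨δ + δ - 2, u, v, huv, by rw [hr, hr]⟩
  obtain ⟨a, b, hab, hk⟩ := hmem
  rw [hr a, hr b] at hk
  exact hk.symm

/-- In a connected graph with at least two vertices, every vertex has a neighbor. -/
lemma exists_neighbor_of_connected {G : SimpleGraph V} (hG : G.Connected)
    (i j : V) (hne : j ≠ i) : ∃ w, G.Adj i w := by
  obtain ⟨p⟩ := hG.preconnected i j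
  cases p with
  | nil => exact absurd rfl hne
  | cons h p => exact ⟨_, h⟩

/-- A connected 1-regular-or-less graph has at most two vertices:
    its vertex set is contained in a pair. -/
lemma card_le_two_of_one_regular [Fintype V] {G : SimpleGraph V} (hG : G.Connected)
    (hr : ∀ v, (G.neighborSet v).ncard = 1) : Fintype.card V ≤ 2 := by
  classical
  obtain ⟨i0⟩ := hG.nonempty
  have h0 : (G.neighborSet i0).Nonempty := nonempty_of_ncard_ne_zero (by rw [hr]; omega)
  obtain ⟨j0, hj0⟩ := h0
  have hnbr : ∀ a b : V, a ∈ ({i0, j0} : Set V) → G.Adj a b → b ∈ ({i0, j0} : Set V) := by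
    intro a b ha hab
    rcases ha with rfl | ha
    · have : G.neighborSet a = {j0} := by
        refine (eq_of_subset_of_ncard_le ?_ ?_ (toFinite _)).symm
        · simpa using hj0
        · rw [hr]; simp
      have : b ∈ G.neighborSet a := hab
      rw [‹G.neighborSet a = {j0}›] at this
      right; exact this
    · rw [mem_singleton_iff] at ha; subst ha
      have : G.neighborSet a = {i0} := by
        refine (eq_of_subset_of_ncard_le ?_ ?_ (toFinite _)).symm
        · simpa using hj0.symm  -- i0 ∈ neighborSet j0
        · rw [hr]; simp
      have hb : b ∈ G.neighborSet a := hab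
      rw [‹G.neighborSet a = {i0}›] at hb
      left; exact hb
  have hwalk : ∀ (a z : V) (_ : G.Walk a z), a ∈ ({i0, j0} : Set V) →
      z ∈ ({i0, j0} : Set V) := by
    intro a z w
    induction w with
    | nil => exact fun h => h
    | cons h p ih => exact fun ha => ih (hnbr _ _ ha h)
  have huniv : (univ : Set V) ⊆ {i0, j0} := by
    intro z _
    obtain ⟨w⟩ := hG.preconnected i0 z
    exact hwalk _ _ w (by left; rfl)
  calc Fintype.card V = (univ : Set V).ncard := by rw [ncard_univ, Nat.card_eq_fintype_card]
    _ ≤ ({i0, j0} : Set V).ncard := ncard_le_ncard huniv (toFinite _)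
    _ ≤ 2 := (ncard_insert_le _ _).trans (by simp)

end Basics

end RPAux
namespace RPAux
section RP
set_option linter.unusedSectionVars false

open Set

variable {V1 V2 : Type*} [Fintype V1] [Fintype V2] {δ1 δ2 : ℕ}
  {G1 : SimpleGraph V1} {G2 : SimpleGraph V2} {ℓ : V1 → V2 → V1}

local notation "R" => replacementProduct G1 G2 ℓ

/-- Cloud part of an edge set at `x`. -/
def cloudF (F : Set (Sym2 (V1 × V2))) (x : V1) : Set (Sym2 V2) :=
  Sym2.map (fun i => (x, i)) ⁻¹' F

lemma mem_cloudF {F : Set (Sym2 (V1 × V2))} {x : V1} {i j : V2} :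
    s(i, j) ∈ cloudF F x ↔ s((x, i), (x, j)) ∈ F := by
  rw [cloudF, Set.mem_preimage, Sym2.map_pair_eq]

/-- External part of an edge set. -/
def extF (G1 : SimpleGraph V1) (F : Set (Sym2 (V1 × V2))) : Set (Sym2 (V1 × V2)) :=
  {e ∈ F | Sym2.map Prod.fst e ∈ G1.edgeSet}

lemma extF_subset (G1 : SimpleGraph V1) (F : Set (Sym2 (V1 × V2))) : extF G1 F ⊆ F :=
  fun _ he => he.1

lemma lab_surj (hℓ : IsRPLabelling G1 ℓ) (hr1 : ∀ x : V1, (G1.neighborSet x).ncard = δ1)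
    (hd : Fintype.card V2 = δ1) {x y : V1} (h : G1.Adj x y) : ∃ j, ℓ x j = y := by
  have hsub : Set.range (ℓ x) ⊆ G1.neighborSet x := by
    rintro z ⟨j, rfl⟩; exact hℓ.2 x j
  have hcard : (G1.neighborSet x).ncard ≤ (Set.range (ℓ x)).ncard := by
    rw [← image_univ, ncard_image_of_injective _ (hℓ.1 x), ncard_univ,
      Nat.card_eq_fintype_card, hd, hr1]
  have hEq := eq_of_subset_of_ncard_le hsub hcard (toFinite _)
  have hy : y ∈ Set.range (ℓ x) := by rw [hEq]; exact h
  exact hy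

lemma lab_ne (hℓ : IsRPLabelling G1 ℓ) (x : V1) (i : V2) : ℓ x i ≠ x :=
  (hℓ.2 x i).ne'

open Classical in
/-- The label at the other end of the external edge at `(x,i)`. -/
noncomputable def partner (ℓ : V1 → V2 → V1) (x : V1) (i : V2) : V2 :=
  if h : ∃ j, ℓ (ℓ x i) j = x then h.choose else i

lemma partner_spec (hℓ : IsRPLabelling G1 ℓ) (hr1 : ∀ x : V1, (G1.neighborSet x).ncard = δ1)
    (hd : Fintype.card V2 = δ1) (x : V1) (i : V2) :
    ℓ (ℓ x i) (partner ℓ x i) = x := by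
  have h : ∃ j, ℓ (ℓ x i) j = x := lab_surj hℓ hr1 hd (hℓ.2 x i).symm
  unfold partner
  rw [dif_pos h]
  exact h.choose_spec

/-- The external edge of `R` at `(x, i)`. -/
noncomputable def extEdge (ℓ : V1 → V2 → V1) (x : V1) (i : V2) : Sym2 (V1 × V2) :=
  s((x, i), (ℓ x i, partner ℓ x i))

lemma extEdge_fst (ℓ : V1 → V2 → V1) (x : V1) (i : V2) :
    Sym2.map Prod.fst (extEdge ℓ x i) = s(x, ℓ x i) := by
  rw [extEdge, Sym2.map_pair_eq]

lemma adj_extEdge (hℓ : IsRPLabelling G1 ℓ) (hr1 : ∀ x : V1, (G1.neighborSet x).ncard = δ1)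
    (hd : Fintype.card V2 = δ1) (x : V1) (i : V2) :
    (replacementProduct G1 G2 ℓ).Adj (x, i) (ℓ x i, partner ℓ x i) :=
  Or.inr ⟨hℓ.2 x i, rfl, partner_spec hℓ hr1 hd x i⟩

lemma extEdge_mem_edgeSet (hℓ : IsRPLabelling G1 ℓ)
    (hr1 : ∀ x : V1, (G1.neighborSet x).ncard = δ1)
    (hd : Fintype.card V2 = δ1) (x : V1) (i : V2) :
    extEdge ℓ x i ∈ (replacementProduct G1 G2 ℓ).edgeSet :=
  adj_extEdge hℓ hr1 hd x i

lemma ext_unique (hℓ : IsRPLabelling G1 ℓ) (hr1 : ∀ x : V1, (G1.neighborSet x).ncard = δ1)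
    (hd : Fintype.card V2 = δ1) {p q : V1 × V2}
    (h : (replacementProduct G1 G2 ℓ).Adj p q) (hne : p.1 ≠ q.1) :
    q = (ℓ p.1 p.2, partner ℓ p.1 p.2) := by
  rcases h with ⟨h1, -⟩ | ⟨hadj, h1, h2⟩
  · exact absurd h1 hne
  · have hinj := hℓ.1 q.1
    have hsp : ℓ (ℓ p.1 p.2) (partner ℓ p.1 p.2) = p.1 := partner_spec hℓ hr1 hd p.1 p.2
    have hq2 : q.2 = partner ℓ p.1 p.2 := by
      apply hinj
      rw [h1] at hsp
      rw [h2, hsp]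
    exact Prod.ext h1.symm hq2

lemma extEdge_of_adj (hℓ : IsRPLabelling G1 ℓ) (hr1 : ∀ x : V1, (G1.neighborSet x).ncard = δ1)
    (hd : Fintype.card V2 = δ1) {p q : V1 × V2}
    (h : (replacementProduct G1 G2 ℓ).Adj p q) (hne : p.1 ≠ q.1) :
    s(p, q) = extEdge ℓ p.1 p.2 ∧ ℓ p.1 p.2 = q.1 := by
  have hq := ext_unique hℓ hr1 hd h hne
  constructor
  · rw [extEdge, hq]
  · rw [hq]

lemma extEdge_inj (hℓ : IsRPLabelling G1 ℓ) {x : V1} {i j : V2}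
    (h : extEdge ℓ x i = extEdge ℓ x j) : i = j := by
  rw [extEdge, extEdge, Sym2.eq_iff] at h
  rcases h with ⟨h1, -⟩ | ⟨h1, -⟩
  · exact congrArg Prod.snd h1
  · exact absurd (congrArg Prod.fst h1).symm (lab_ne hℓ x j)

lemma neighborSet_R (hℓ : IsRPLabelling G1 ℓ) (hr1 : ∀ x : V1, (G1.neighborSet x).ncard = δ1)
    (hd : Fintype.card V2 = δ1) (x : V1) (i : V2) :
    (replacementProduct G1 G2 ℓ).neighborSet (x, i) =
      (fun j => (x, j)) '' (G2.neighborSet i) ∪ {(ℓ x i, partner ℓ x i)} := by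
  ext q
  constructor
  · intro hq
    by_cases hx : (x, i).1 = q.1
    · rcases hq with ⟨-, h2⟩ | ⟨hadj, -, -⟩
      · left; exact ⟨q.2, h2, Prod.ext hx rfl⟩
      · exact absurd hx hadj.ne
    · right
      rw [Set.mem_singleton_iff]
      exact ext_unique hℓ hr1 hd hq hx
  · rintro (⟨j, hj, rfl⟩ | hq)
    · exact Or.inl ⟨rfl, hj⟩
    · rw [Set.mem_singleton_iff] at hq
      subst hq
      exact adj_extEdge hℓ hr1 hd x i

lemma ncard_neighborSet_R (hℓ : IsRPLabelling G1 ℓ)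
    (hr1 : ∀ x : V1, (G1.neighborSet x).ncard = δ1)
    (hr2 : ∀ i : V2, (G2.neighborSet i).ncard = δ2)
    (hd : Fintype.card V2 = δ1) (x : V1) (i : V2) :
    ((replacementProduct G1 G2 ℓ).neighborSet (x, i)).ncard = δ2 + 1 := by
  rw [neighborSet_R hℓ hr1 hd]
  have hinj : Function.Injective (fun j : V2 => (x, j)) := by
    intro a b hab; exact congrArg Prod.snd hab
  have hdisj : Disjoint ((fun j => (x, j)) '' (G2.neighborSet i))
      ({(ℓ x i, partner ℓ x i)} : Set (V1 × V2)) := by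
    rw [Set.disjoint_singleton_right]
    rintro ⟨j, -, hj⟩
    exact lab_ne hℓ x i (congrArg Prod.fst hj).symm
  rw [ncard_union_eq hdisj (toFinite _) (toFinite _),
    ncard_image_of_injective _ hinj, hr2, ncard_singleton]

/-- Cloud edges of `F` at `x`, as edges of `G2`, are actual `G2`-edges. -/
lemma cloudF_subset_edgeSet {F : Set (Sym2 (V1 × V2))}
    (hFE : F ⊆ (replacementProduct G1 G2 ℓ).edgeSet) (x : V1) :
    cloudF F x ⊆ G2.edgeSet := by
  intro e he
  induction e using Sym2.ind with | _ i j =>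
  rw [mem_cloudF] at he
  have : (replacementProduct G1 G2 ℓ).Adj (x, i) (x, j) := hFE he
  rcases this with ⟨-, h2⟩ | ⟨hadj, -, -⟩
  · exact h2
  · exact absurd rfl hadj.ne

def cloudHom (F : Set (Sym2 (V1 × V2))) (x : V1) :
    (G2.deleteEdges (cloudF F x)) →g ((replacementProduct G1 G2 ℓ).deleteEdges F) where
  toFun i := (x, i)
  map_rel' := by
    intro a b h
    rw [SimpleGraph.deleteEdges_adj] at h ⊢
    refine ⟨Or.inl ⟨rfl, h.1⟩, ?_⟩
    intro hmem
    exact h.2 (mem_cloudF.2 hmem)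

lemma cloud_adj {F : Set (Sym2 (V1 × V2))} {x : V1} {i j : V2}
    (h : (G2.deleteEdges (cloudF F x)).Adj i j) :
    ((replacementProduct G1 G2 ℓ).deleteEdges F).Adj (x, i) (x, j) :=
  (cloudHom F x).map_rel h

lemma cloud_reach {F : Set (Sym2 (V1 × V2))} {x : V1}
    (hx : (G2.deleteEdges (cloudF F x)).Connected) (i j : V2) :
    ((replacementProduct G1 G2 ℓ).deleteEdges F).Reachable (x, i) (x, j) :=
  (hx.preconnected i j).map (cloudHom F x)

end RP
end RPAux
namespace RPAux
section RP2
set_option linter.unusedSectionVars false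

open Set

variable {V1 V2 : Type*} [Fintype V1] [Fintype V2] {δ1 δ2 : ℕ}
  {G1 : SimpleGraph V1} {G2 : SimpleGraph V2} {ℓ : V1 → V2 → V1}

/-- Lifting a walk of `G1` (minus removed external images, within allowed clouds `A`)
to reachability in `R - F`, entering and leaving clouds anywhere. -/
lemma good_lift (hℓ : IsRPLabelling G1 ℓ) (hr1 : ∀ x : V1, (G1.neighborSet x).ncard = δ1)
    (hd : Fintype.card V2 = δ1) (F : Set (Sym2 (V1 × V2))) (A : Set V1)
    (hA : ∀ x ∈ A, (G2.deleteEdges (cloudF F x)).Connected) :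
    ∀ (u v : ↥A)
      (_ : ((G1.deleteEdges (Sym2.map Prod.fst '' extF G1 F)).induce A).Walk u v)
      (i j : V2),
      ((replacementProduct G1 G2 ℓ).deleteEdges F).Reachable ((u : V1), i) ((v : V1), j) := by
  intro u v w
  induction w with
  | nil =>
    intro i j
    exact cloud_reach (hA _ (by exact Subtype.coe_prop _)) i j
  | @cons u m v hadj p ih =>
    intro i j
    have hadj' : (G1.deleteEdges (Sym2.map Prod.fst '' extF G1 F)).Adj (u : V1) (m : V1) := hadj
    rw [SimpleGraph.deleteEdges_adj] at hadj'
    obtain ⟨a, ha⟩ := lab_surj hℓ hr1 hd hadj'.1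
    have hnotin : extEdge ℓ (u : V1) a ∉ F := by
      intro hmem
      apply hadj'.2
      refine ⟨extEdge ℓ (u : V1) a, ⟨hmem, ?_⟩, ?_⟩
      · rw [extEdge_fst, ha]
        exact (G1.mem_edgeSet).2 hadj'.1
      · rw [extEdge_fst, ha]
    have hstep : ((replacementProduct G1 G2 ℓ).deleteEdges F).Adj
        ((u : V1), a) (ℓ (u : V1) a, partner ℓ (u : V1) a) := by
      rw [SimpleGraph.deleteEdges_adj]
      exact ⟨adj_extEdge hℓ hr1 hd _ _, hnotin⟩
    have h1 : ((replacementProduct G1 G2 ℓ).deleteEdges F).Reachable ((u : V1), i) ((u : V1), a) :=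
      cloud_reach (hA _ (Subtype.coe_prop u)) i a
    have h2 := hstep.reachable
    rw [ha] at h2
    exact (h1.trans h2).trans (ih (partner ℓ (u : V1) a) j)

lemma connected_induce_compl_singleton (hκ : 2 ≤ vertexConn G1) (x0 : V1) :
    (G1.induce ({x0}ᶜ : Set V1)).Connected := by
  by_contra hc
  have hle : vertexConn G1 ≤ 1 := Nat.sInf_le ⟨{x0}, ncard_singleton x0, Or.inl hc⟩
  omega

lemma connected_induce_compl_singleton_deleteEdge
    (hκ : 3 ≤ vertexConn G1) (hδ : ∀ x : V1, (G1.neighborSet x).ncard = δ1) (h3 : 3 ≤ δ1)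
    (x0 u v : V1) (huv : G1.Adj u v) (hu : u ≠ x0) (hv : v ≠ x0) :
    ((G1.deleteEdges {s(u, v)}).induce ({x0}ᶜ : Set V1)).Connected := by
  classical
  by_contra hc
  set H := (G1.deleteEdges {s(u, v)}).induce ({x0}ᶜ : Set V1) with hH
  have hune : u ∈ ({x0}ᶜ : Set V1) := hu
  have hnp : ¬ H.Preconnected := by
    intro hp
    exact hc ((H.connected_iff).2 ⟨hp, ⟨⟨u, hune⟩⟩⟩)
  rw [SimpleGraph.Preconnected] at hnp; push_neg at hnp
  obtain ⟨a, b, hab⟩ := hnp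
  -- a replacement for vertices equal to u
  have hrep : ∀ (c : ↥({x0}ᶜ : Set V1)), (c : V1) = u →
      ∃ w : ↥({x0}ᶜ : Set V1), (w : V1) ≠ u ∧ H.Adj c w := by
    intro c hcu
    have hex : ∃ w ∈ G1.neighborSet u, w ≠ x0 ∧ w ≠ v := by
      by_contra hno; push_neg at hno
      have hsub : G1.neighborSet u ⊆ {x0, v} := by
        intro w hw
        by_cases hwx : w = x0
        · left; exact hwx
        · right; exact hno w hw hwx
      have hle := ncard_le_ncard hsub (toFinite _)
      rw [hδ] at hle
      have : ({x0, v} : Set V1).ncard ≤ 2 :=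
        (ncard_insert_le _ _).trans (by rw [ncard_singleton])
      omega
    obtain ⟨w, hw, hwx0, hwv⟩ := hex
    have hadjuw : G1.Adj u w := hw
    refine ⟨⟨w, hwx0⟩, hadjuw.ne', ?_⟩
    show (G1.deleteEdges {s(u, v)}).Adj (c : V1) w
    rw [hcu, SimpleGraph.deleteEdges_adj]
    refine ⟨hadjuw, ?_⟩
    intro hmem
    rw [mem_singleton_iff, Sym2.eq_iff] at hmem
    rcases hmem with ⟨-, h2⟩ | ⟨h1, -⟩
    · exact hwv h2
    · exact huv.ne h1
  have key : ∃ (a' b' : ↥({x0}ᶜ : Set V1)), (a' : V1) ≠ u ∧ (b' : V1) ≠ u ∧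
      ¬ H.Reachable a' b' := by
    by_cases hau : (a : V1) = u
    · obtain ⟨w, hwu, hadjw⟩ := hrep a hau
      by_cases hbu : (b : V1) = u
      · exact absurd (Subtype.ext (hau.trans hbu.symm) ▸ SimpleGraph.Reachable.refl a) hab
      · exact ⟨w, b, hwu, hbu, fun hr => hab (hadjw.reachable.trans hr)⟩
    · by_cases hbu : (b : V1) = u
      · obtain ⟨w, hwu, hadjw⟩ := hrep b hbu
        exact ⟨a, w, hau, hwu, fun hr => hab (hr.trans hadjw.reachable.symm)⟩
      · exact ⟨a, b, hau, hbu, hab⟩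
  obtain ⟨a', b', ha'u, hb'u, hnr⟩ := key
  have hmemA : (a' : V1) ∈ ({x0, u}ᶜ : Set V1) := by
    simp only [mem_compl_iff, mem_insert_iff, mem_singleton_iff, not_or]
    exact ⟨a'.2, ha'u⟩
  have hmemB : (b' : V1) ∈ ({x0, u}ᶜ : Set V1) := by
    simp only [mem_compl_iff, mem_insert_iff, mem_singleton_iff, not_or]
    exact ⟨b'.2, hb'u⟩
  -- hom from induce {x0,u}ᶜ to H
  let hom : (G1.induce ({x0, u}ᶜ : Set V1)) →g H :=
    { toFun := fun z => ⟨(z : V1), by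
        have hz := z.2
        simp only [mem_compl_iff, mem_insert_iff, mem_singleton_iff, not_or] at hz
        exact hz.1⟩,
      map_rel' := by
        intro z w hzw
        have hz := z.2; have hwp := w.2
        simp only [mem_compl_iff, mem_insert_iff, mem_singleton_iff, not_or] at hz hwp
        have hadj : G1.Adj (z : V1) (w : V1) := hzw
        show (G1.deleteEdges {s(u, v)}).Adj (z : V1) (w : V1)
        rw [SimpleGraph.deleteEdges_adj]
        refine ⟨hadj, ?_⟩
        intro hmem
        rw [mem_singleton_iff, Sym2.eq_iff] at hmem
        rcases hmem with ⟨h1, -⟩ | ⟨-, h2⟩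
        · exact hz.2 h1
        · exact hwp.2 h2 }
  have hnc : ¬ (G1.induce ({x0, u}ᶜ : Set V1)).Connected := by
    intro hcon
    have hr := hcon.preconnected ⟨(a' : V1), hmemA⟩ ⟨(b' : V1), hmemB⟩
    have h2 := hr.map hom
    have e1 : hom ⟨(a' : V1), hmemA⟩ = a' := Subtype.ext rfl
    have e2 : hom ⟨(b' : V1), hmemB⟩ = b' := Subtype.ext rfl
    rw [e1, e2] at h2
    exact hnr h2
  have hle : vertexConn G1 ≤ 2 :=
    Nat.sInf_le ⟨{x0, u}, ncard_pair (Ne.symm hu), Or.inl hnc⟩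
  omega

/-- If `G2` is `λ'`-optimal, `δ2`-regular with `δ2 ≥ 2`, then it has no bridge. -/
lemma two_le_edgeConn_G2 (hc2 : G2.Connected)
    (hr2 : ∀ i : V2, (G2.neighborSet i).ncard = δ2) (hδ : 2 ≤ δ2)
    (hopt : LambdaPrimeOptimal G2) : 2 ≤ edgeConn G2 := by
  obtain ⟨i0⟩ := hc2.nonempty
  have hnb : (G2.neighborSet i0).Nonempty := nonempty_of_ncard_ne_zero (by rw [hr2]; omega)
  obtain ⟨j0, hj0⟩ := hnb
  have hadj : G2.Adj i0 j0 := hj0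
  have h1 : 1 ≤ edgeConn G2 := one_le_edgeConn_of_witness hc2 i0 j0 hadj.ne'
  by_contra hlt
  push_neg at hlt
  have heq : edgeConn G2 = 1 := by omega
  obtain ⟨F2, hFE, hFc, hFd⟩ := edgeConn_witness G2 i0 j0 hadj.ne'
  rw [heq, ncard_eq_one] at hFc
  obtain ⟨e, rfl⟩ := hFc
  have hrc : IsRestrictedEdgeCut G2 {e} := by
    refine ⟨hFE, hFd, ?_⟩
    intro i
    apply exists_adj_deleteEdges_of_ncard_lt
    rw [ncard_singleton, hr2]
    omega
  have hle : restrictedEdgeConn G2 ≤ 1 := by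
    have := restrictedEdgeConn_le G2 hrc
    rwa [ncard_singleton] at this
  rw [hopt, minEdgeDegree_regular G2 hr2 hadj] at hle
  omega

lemma delta2_lt_card (hr2 : ∀ i : V2, (G2.neighborSet i).ncard = δ2) (i : V2) :
    δ2 < Fintype.card V2 := by
  have hni : i ∉ G2.neighborSet i := fun h => G2.irrefl h
  have h1 : (insert i (G2.neighborSet i)).ncard = δ2 + 1 := by
    rw [ncard_insert_of_notMem hni (toFinite _), hr2]
  have h2 : (insert i (G2.neighborSet i)).ncard ≤ (univ : Set V2).ncard :=
    ncard_le_ncard (subset_univ _) (toFinite _)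
  rw [ncard_univ, Nat.card_eq_fintype_card] at h2
  omega

lemma ncard_cloudF (F : Set (Sym2 (V1 × V2))) (x : V1) :
    (cloudF F x).ncard = (F ∩ Set.range (Sym2.map (fun i : V2 => (x, i)))).ncard := by
  have hinj : Function.Injective (Sym2.map (fun i : V2 => (x, i))) :=
    Sym2.map.injective (fun a b h => congrArg Prod.snd h)
  rw [← ncard_image_of_injective (cloudF F x) hinj, cloudF, Set.image_preimage_eq_inter_range]

lemma ncard_add_le_of_disjoint {α : Type*} {A B F : Set α} (hA : A ⊆ F) (hB : B ⊆ F)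
    (hAB : Disjoint A B) (hF : F.Finite) : A.ncard + B.ncard ≤ F.ncard := by
  rw [← ncard_union_eq hAB (hF.subset hA) (hF.subset hB)]
  exact ncard_le_ncard (union_subset hA hB) hF

lemma cloud_ranges_disjoint {x y : V1} (h : x ≠ y) :
    Disjoint (Set.range (Sym2.map (fun i : V2 => (x, i))))
      (Set.range (Sym2.map (fun i : V2 => (y, i)))) := by
  rw [Set.disjoint_left]
  rintro e ⟨a, rfl⟩ ⟨b, hb⟩
  induction a using Sym2.ind with | _ i j =>
  induction b using Sym2.ind with | _ k l =>
  rw [Sym2.map_pair_eq, Sym2.map_pair_eq, Sym2.eq_iff] at hb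
  rcases hb with ⟨h1, -⟩ | ⟨h1, -⟩ <;> exact h (congrArg Prod.fst h1).symm

lemma extF_disjoint_cloud (F : Set (Sym2 (V1 × V2))) (x : V1) :
    Disjoint (extF G1 F) (Set.range (Sym2.map (fun i : V2 => (x, i)))) := by
  rw [Set.disjoint_left]
  rintro e he ⟨a, rfl⟩
  induction a using Sym2.ind with | _ i j =>
  have := he.2
  rw [Sym2.map_pair_eq, Sym2.map_pair_eq] at this
  exact G1.irrefl ((G1.mem_edgeSet).1 this)

lemma ext_edge_form (hℓ : IsRPLabelling G1 ℓ) (hr1 : ∀ x : V1, (G1.neighborSet x).ncard = δ1)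
    (hd : Fintype.card V2 = δ1) {e : Sym2 (V1 × V2)}
    (he : e ∈ (replacementProduct G1 G2 ℓ).edgeSet) {x y : V1} (hxy : G1.Adj x y)
    (hπ : Sym2.map Prod.fst e = s(x, y)) :
    ∃ i, ℓ x i = y ∧ e = extEdge ℓ x i := by
  induction e using Sym2.ind with | _ p q =>
  rw [Sym2.map_pair_eq, Sym2.eq_iff] at hπ
  have hadj : (replacementProduct G1 G2 ℓ).Adj p q := ((replacementProduct G1 G2 ℓ).mem_edgeSet).1 he
  rcases hπ with ⟨h1, h2⟩ | ⟨h1, h2⟩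
  · have hne : p.1 ≠ q.1 := by rw [h1, h2]; exact hxy.ne
    obtain ⟨hEq, hl⟩ := extEdge_of_adj hℓ hr1 hd hadj hne
    refine ⟨p.2, ?_, ?_⟩
    · rw [← h1]; exact hl.trans h2
    · rw [← h1]; exact hEq
  · have hne : q.1 ≠ p.1 := by rw [h1, h2]; exact hxy.ne
    obtain ⟨hEq, hl⟩ := extEdge_of_adj hℓ hr1 hd hadj.symm hne
    refine ⟨q.2, ?_, ?_⟩
    · rw [← h2]; exact hl.trans h1
    · rw [← h2, Sym2.eq_swap]; exact hEq

end RP2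
end RPAux
namespace RPAux
section RP3
set_option linter.unusedSectionVars false
set_option maxHeartbeats 1000000

open Set

variable {V1 V2 : Type*} [Fintype V1] [Fintype V2] {δ1 δ2 : ℕ}
  {G1 : SimpleGraph V1} {G2 : SimpleGraph V2} {ℓ : V1 → V2 → V1}

/-- The key connectivity lemma: removing fewer than `λ(G1)` edges, and at most `δ2+1`
of them, from the replacement product leaves it connected provided no vertex is
isolated. -/
lemma key_connected (hℓ : IsRPLabelling G1 ℓ) (hc1 : G1.Connected) (hc2 : G2.Connected)
    (hr1 : ∀ x : V1, (G1.neighborSet x).ncard = δ1)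
    (hr2 : ∀ i : V2, (G2.neighborSet i).ncard = δ2)
    (hd : Fintype.card V2 = δ1) (hopt : LambdaPrimeOptimal G2)
    (hκ : (edgeConn G1 + 1 ≤ vertexConn G1 + edgeConn G2 ∧
        edgeConn G2 + 1 ≤ edgeConn G1) ∨ edgeConn G2 + 1 ≤ vertexConn G1)
    (F : Set (Sym2 (V1 × V2))) (hFE : F ⊆ (replacementProduct G1 G2 ℓ).edgeSet)
    (hF1 : F.ncard < edgeConn G1) (hF2 : F.ncard ≤ δ2 + 1)
    (hiso : ∀ p, ∃ q, ((replacementProduct G1 G2 ℓ).deleteEdges F).Adj p q) :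
    ((replacementProduct G1 G2 ℓ).deleteEdges F).Connected := by
  classical
  haveI : Nonempty V1 := hc1.nonempty
  haveI : Nonempty V2 := hc2.nonempty
  set S : Set (Sym2 V1) := Sym2.map Prod.fst '' extF G1 F with hS
  have hSE : S ⊆ G1.edgeSet := by rintro e ⟨e', he', rfl⟩; exact he'.2
  have hScard : S.ncard ≤ F.ncard :=
    (ncard_image_le (toFinite _)).trans (ncard_le_ncard (extF_subset _ _) (toFinite _))
  have hSconn : (G1.deleteEdges S).Connected :=
    connected_deleteEdges_of_lt G1 hSE (lt_of_le_of_lt hScard hF1)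
  by_cases hbad : ∃ x0, ¬(G2.deleteEdges (cloudF F x0)).Connected
  case neg =>
    push_neg at hbad
    rw [SimpleGraph.connected_iff]
    refine ⟨?_, inferInstance⟩
    rintro ⟨x, i⟩ ⟨y, j⟩
    have hpre := hSconn.preconnected x y
    let hom : (G1.deleteEdges S) →g ((G1.deleteEdges S).induce (univ : Set V1)) :=
      ⟨fun z => ⟨z, mem_univ z⟩, fun h => h⟩
    obtain ⟨w⟩ := hpre.map hom
    exact good_lift hℓ hr1 hd F univ (fun x _ => hbad x) ⟨x, mem_univ x⟩ ⟨y, mem_univ y⟩ w i j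
  case pos =>
  obtain ⟨x0, hx0⟩ := hbad
  have hcsub := cloudF_subset_edgeSet hFE x0
  -- δ2 is positive
  have hδ2pos : 1 ≤ δ2 := by
    by_contra h0
    push_neg at h0
    have hempty : cloudF F x0 = ∅ := by
      rw [eq_empty_iff_forall_notMem]
      intro e
      induction e using Sym2.ind with
      | _ i j =>
        intro he
        have heE := hcsub he
        have hadj : G2.Adj i j := (G2.mem_edgeSet).1 heE
        have hj : j ∈ G2.neighborSet i := hadj
        have hz : (G2.neighborSet i).ncard = 0 := by rw [hr2]; omega
        rw [ncard_eq_zero (toFinite _)] at hz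
        rw [hz] at hj
        exact hj
    rw [hempty, SimpleGraph.deleteEdges_empty] at hx0
    exact hx0 hc2
  -- an edge of G2
  obtain ⟨i0⟩ := hc2.nonempty
  have hnb : (G2.neighborSet i0).Nonempty :=
    nonempty_of_ncard_ne_zero (by rw [hr2]; omega)
  obtain ⟨j0, hj0⟩ := hnb
  have hadj0 : G2.Adj i0 j0 := hj0
  have hlam2pos : 1 ≤ edgeConn G2 := one_le_edgeConn_of_witness hc2 i0 j0 hadj0.ne'
  have hκ2 : 2 ≤ vertexConn G1 := by rcases hκ with ⟨ha, hb⟩ | hb <;> omega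
  have hflam2 : edgeConn G2 ≤ (cloudF F x0).ncard := edgeConn_le_of_cut G2 hcsub hx0
  -- cost of a bad cloud
  have hcost : ∀ y : V1, ¬(G2.deleteEdges (cloudF F y)).Connected →
      1 ≤ (cloudF F y).ncard ∧ (2 ≤ δ2 → δ2 ≤ (cloudF F y).ncard) := by
    intro y hy
    have hysub := cloudF_subset_edgeSet hFE y
    have hylb := edgeConn_le_of_cut G2 hysub hy
    refine ⟨by omega, ?_⟩
    intro h2
    by_cases hisol : ∀ i, ∃ j, (G2.deleteEdges (cloudF F y)).Adj i j
    · have hrc : IsRestrictedEdgeCut G2 (cloudF F y) := ⟨hysub, hy, hisol⟩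
      have hle := restrictedEdgeConn_le G2 hrc
      rw [hopt, minEdgeDegree_regular G2 hr2 hadj0] at hle
      omega
    · push_neg at hisol
      obtain ⟨i1, hi1⟩ := hisol
      have hstar : G2.incidenceSet i1 ⊆ cloudF F y := by
        intro e he
        have hmem : i1 ∈ e := he.2
        rw [Sym2.mem_iff_exists] at hmem
        obtain ⟨j, rfl⟩ := hmem
        have hadj : G2.Adj i1 j := (G2.mem_incidenceSet i1 j).1 he
        by_contra hnot
        exact (hi1 j) (by rw [SimpleGraph.deleteEdges_adj]; exact ⟨hadj, hnot⟩)
      have hle := ncard_le_ncard hstar (toFinite _)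
      rwa [ncard_incidenceSet, hr2] at hle
  have hc0 := hcost x0 hx0
  -- budget split: cloud part at x0 plus external part
  have hbudget : (cloudF F x0).ncard + (extF G1 F).ncard ≤ F.ncard := by
    rw [ncard_cloudF]
    refine ncard_add_le_of_disjoint inter_subset_left (extF_subset G1 F) ?_ (toFinite F)
    exact (Disjoint.mono_right inter_subset_right (extF_disjoint_cloud F x0)).symm
  -- the degenerate δ2 = 1 situation forces a tiny budget
  have hfacts1 : δ2 = 1 → F.ncard ≤ 1 := by
    intro h1e
    have hcard2 : Fintype.card V2 ≤ 2 :=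
      card_le_two_of_one_regular hc2 (fun i => by rw [hr2, h1e])
    have hlam1d : edgeConn G1 ≤ δ1 := by
      have := edgeConn_le_degree G1 x0 (ℓ x0 i0) (lab_ne hℓ x0 i0)
      rwa [hr1] at this
    omega
  -- external budget is at most one
  have ht : (extF G1 F).ncard ≤ 1 := by
    by_cases h2 : 2 ≤ δ2
    · have := hc0.2 h2; omega
    · have h1e : δ2 = 1 := by omega
      have := hfacts1 h1e
      omega
  -- x0 is the unique bad cloud
  have hgood : ∀ x : V1, x ≠ x0 → (G2.deleteEdges (cloudF F x)).Connected := by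
    intro x hxne
    by_contra hx
    have hcx := hcost x hx
    have hsum : (cloudF F x0).ncard + (cloudF F x).ncard ≤ F.ncard := by
      rw [ncard_cloudF F x0, ncard_cloudF F x]
      refine ncard_add_le_of_disjoint inter_subset_left inter_subset_left ?_ (toFinite F)
      exact Disjoint.mono inter_subset_right inter_subset_right
        (cloud_ranges_disjoint (Ne.symm hxne))
    by_cases h2 : 2 ≤ δ2
    · have h3 := hc0.2 h2
      have h4 := hcx.2 h2
      omega
    · have h1e : δ2 = 1 := by omega
      have := hfacts1 h1e
      have := hc0.1
      have := hcx.1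
      omega
  -- connectivity of the good part
  have hApart : ((G1.deleteEdges S).induce ({x0}ᶜ : Set V1)).Connected := by
    have hS1 : S.ncard ≤ 1 := le_trans (ncard_image_le (toFinite _)) ht
    rcases Nat.le_one_iff_eq_zero_or_eq_one.1 hS1 with h0 | h1
    · have hSe : S = ∅ := (ncard_eq_zero (toFinite _)).1 h0
      rw [hSe, SimpleGraph.deleteEdges_empty]
      exact connected_induce_compl_singleton hκ2 x0
    · obtain ⟨eb, hSsing⟩ := ncard_eq_one.1 h1
      have hebE : eb ∈ G1.edgeSet := hSE (by rw [hSsing]; exact rfl)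
      rw [hSsing]
      clear hSsing
      revert hebE
      induction eb using Sym2.ind with
      | _ u v =>
        intro hebE
        have huv : G1.Adj u v := (G1.mem_edgeSet).1 hebE
        by_cases hx0e : u = x0 ∨ v = x0
        · have hEq : ((G1.deleteEdges {s(u, v)}).induce ({x0}ᶜ : Set V1)) =
              G1.induce ({x0}ᶜ : Set V1) := by
            ext a b
            show (G1.deleteEdges {s(u, v)}).Adj ↑a ↑b ↔ G1.Adj ↑a ↑b
            rw [SimpleGraph.deleteEdges_adj]
            constructor
            · exact And.left
            · intro h
              refine ⟨h, ?_⟩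
              intro hmem
              have ha' : (a : V1) ≠ x0 := a.2
              have hb' : (b : V1) ≠ x0 := b.2
              rw [mem_singleton_iff, Sym2.eq_iff] at hmem
              rcases hmem with ⟨h1, h2⟩ | ⟨h1, h2⟩ <;> rcases hx0e with h3 | h3 <;>
                first
                  | exact ha' (h1.trans h3)
                  | exact hb' (h2.trans h3)
          rw [hEq]
          exact connected_induce_compl_singleton hκ2 x0
        · push_neg at hx0e
          obtain ⟨hu, hv⟩ := hx0e
          have hext1 : 1 ≤ (extF G1 F).ncard := by
            have hle := ncard_image_le (s := extF G1 F) (f := Sym2.map Prod.fst) (toFinite _)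
            rw [← hS] at hle
            omega
          have h2δ : 2 ≤ δ2 := by
            by_contra hcon
            have h1e : δ2 = 1 := by omega
            have := hfacts1 h1e
            have := hc0.1
            omega
          have hlam2 : 2 ≤ edgeConn G2 := two_le_edgeConn_G2 hc2 hr2 h2δ hopt
          have hκ3 : 3 ≤ vertexConn G1 := by
            rcases hκ with ⟨ha, hb⟩ | hb <;> omega
          have hδ13 : 3 ≤ δ1 := by
            have hlt : δ2 < δ1 := by rw [← hd]; exact delta2_lt_card hr2 i0
            omega
          exact connected_induce_compl_singleton_deleteEdge hκ3 hr1 hδ13 x0 u v huv hu hv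
  -- every vertex of the bad cloud reaches a good cloud
  have hattach : ∀ i : V2, ∃ (z : V1) (k : V2), z ≠ x0 ∧
      ((replacementProduct G1 G2 ℓ).deleteEdges F).Reachable (x0, i) (z, k) := by
    intro i
    by_cases hi : ∃ j, (G2.deleteEdges (cloudF F x0)).Adj i j
    · obtain ⟨j, hj⟩ := hi
      by_cases hei : extEdge ℓ x0 i ∈ F
      · by_cases hej : extEdge ℓ x0 j ∈ F
        · exfalso
          have hm1 : extEdge ℓ x0 i ∈ extF G1 F :=
            ⟨hei, by rw [extEdge_fst]; exact (G1.mem_edgeSet).2 (hℓ.2 x0 i)⟩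
          have hm2 : extEdge ℓ x0 j ∈ extF G1 F :=
            ⟨hej, by rw [extEdge_fst]; exact (G1.mem_edgeSet).2 (hℓ.2 x0 j)⟩
          have hne : extEdge ℓ x0 i ≠ extEdge ℓ x0 j :=
            fun h => (hj.ne : i ≠ j) (extEdge_inj hℓ h)
          have hsub : ({extEdge ℓ x0 i, extEdge ℓ x0 j} : Set (Sym2 (V1 × V2))) ⊆ extF G1 F := by
            intro e he
            rcases he with rfl | he
            · exact hm1
            · rw [mem_singleton_iff] at he; rw [he]; exact hm2
          have hle := ncard_le_ncard hsub (toFinite _)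
          rw [ncard_pair hne] at hle
          omega
        · have hstep1 : ((replacementProduct G1 G2 ℓ).deleteEdges F).Adj (x0, i) (x0, j) :=
            cloud_adj hj
          have hstep2 : ((replacementProduct G1 G2 ℓ).deleteEdges F).Adj (x0, j)
              (ℓ x0 j, partner ℓ x0 j) := by
            rw [SimpleGraph.deleteEdges_adj]
            exact ⟨adj_extEdge hℓ hr1 hd x0 j, hej⟩
          exact ⟨ℓ x0 j, partner ℓ x0 j, lab_ne hℓ x0 j,
            hstep1.reachable.trans hstep2.reachable⟩
      · have hstep : ((replacementProduct G1 G2 ℓ).deleteEdges F).Adj (x0, i)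
            (ℓ x0 i, partner ℓ x0 i) := by
          rw [SimpleGraph.deleteEdges_adj]
          exact ⟨adj_extEdge hℓ hr1 hd x0 i, hei⟩
        exact ⟨ℓ x0 i, partner ℓ x0 i, lab_ne hℓ x0 i, hstep.reachable⟩
    · push_neg at hi
      obtain ⟨q, hq⟩ := hiso (x0, i)
      obtain ⟨qa, qb⟩ := q
      have hq' := (SimpleGraph.deleteEdges_adj).1 hq
      rcases hq'.1 with ⟨h1, h2⟩ | ⟨hadj1, -, -⟩
      · exfalso
        apply hi qb
        rw [SimpleGraph.deleteEdges_adj]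
        refine ⟨h2, ?_⟩
        intro hmem
        rw [mem_cloudF] at hmem
        apply hq'.2
        have h1' : x0 = qa := h1
        rw [← h1']
        exact hmem
      · exact ⟨qa, qb, hadj1.ne', hq.reachable⟩
  -- assembly
  rw [SimpleGraph.connected_iff]
  refine ⟨?_, inferInstance⟩
  have hout : ∀ p : V1 × V2, ∃ (z : V1) (k : V2), z ≠ x0 ∧
      ((replacementProduct G1 G2 ℓ).deleteEdges F).Reachable p (z, k) := by
    rintro ⟨x, i⟩
    by_cases hx : x = x0
    · subst hx; exact hattach i
    · exact ⟨x, i, hx, SimpleGraph.Reachable.refl _⟩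
  intro p q
  obtain ⟨z1, k1, hz1, hp⟩ := hout p
  obtain ⟨z2, k2, hz2, hqq⟩ := hout q
  have hmid : ((replacementProduct G1 G2 ℓ).deleteEdges F).Reachable (z1, k1) (z2, k2) := by
    have hA : ∀ x ∈ ({x0}ᶜ : Set V1), (G2.deleteEdges (cloudF F x)).Connected :=
      fun x hx => hgood x hx
    obtain ⟨w⟩ := hApart.preconnected ⟨z1, hz1⟩ ⟨z2, hz2⟩
    exact good_lift hℓ hr1 hd F _ hA ⟨z1, hz1⟩ ⟨z2, hz2⟩ w k1 k2
  exact (hp.trans hmid).trans hqq.symm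

end RP3
end RPAux
namespace RPAux
section RP4
set_option linter.unusedSectionVars false
set_option maxHeartbeats 1000000

open Set

variable {V1 V2 : Type*} [Fintype V1] [Fintype V2] {δ1 δ2 : ℕ}
  {G1 : SimpleGraph V1} {G2 : SimpleGraph V2} {ℓ : V1 → V2 → V1}

/-- Projection of reachability in `R` minus a lifted cut to `G1` minus the cut. -/
lemma project_reach {F1 : Set (Sym2 V1)} {p q : V1 × V2}
    (h : ((replacementProduct G1 G2 ℓ).deleteEdges
      {e ∈ (replacementProduct G1 G2 ℓ).edgeSet | Sym2.map Prod.fst e ∈ F1}).Reachable p q) :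
    (G1.deleteEdges F1).Reachable p.1 q.1 := by
  obtain ⟨w⟩ := h
  induction w with
  | nil => exact SimpleGraph.Reachable.refl _
  | @cons u m v hadj wk ih =>
    have hadj' := (SimpleGraph.deleteEdges_adj).1 hadj
    rcases hadj'.1 with ⟨h1, -⟩ | ⟨hG1, -, -⟩
    · rw [(show u.1 = m.1 from h1)]
      exact ih
    · have hstep : (G1.deleteEdges F1).Adj u.1 m.1 := by
        rw [SimpleGraph.deleteEdges_adj]
        refine ⟨hG1, ?_⟩
        intro hmem
        apply hadj'.2
        refine ⟨(replacementProduct G1 G2 ℓ).mem_edgeSet.2 hadj'.1, ?_⟩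
        rw [Sym2.map_pair_eq]
        exact hmem
      exact hstep.reachable.trans ih

/-- Walks in `R` minus the cloud-isolating cut cannot leave the cloud `x0`. -/
lemma trap_cloud (hℓ : IsRPLabelling G1 ℓ) (hr1 : ∀ x : V1, (G1.neighborSet x).ncard = δ1)
    (hd : Fintype.card V2 = δ1) (x0 : V1) {p q : V1 × V2}
    (h : ((replacementProduct G1 G2 ℓ).deleteEdges
      (Set.range (extEdge ℓ x0))).Reachable p q) (hp : p.1 = x0) : q.1 = x0 := by
  obtain ⟨w⟩ := h
  induction w with
  | nil => exact hp
  | @cons u m v hadj wk ih =>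
    have hadj' := (SimpleGraph.deleteEdges_adj).1 hadj
    have hR : (replacementProduct G1 G2 ℓ).Adj u m := hadj'.1
    rcases hadj'.1 with ⟨h1, -⟩ | ⟨hG1, -, -⟩
    · exact ih (h1 ▸ hp)
    · exfalso
      apply hadj'.2
      obtain ⟨hEq, -⟩ := extEdge_of_adj hℓ hr1 hd hR hG1.ne
      refine ⟨u.2, ?_⟩
      rw [← hp]
      exact hEq.symm

/-- The cloud-isolating cut is a restricted edge-cut of `R` (when `δ2 ≥ 1`,
`G1` has at least two vertices). -/
lemma cloud_cut_restricted (hℓ : IsRPLabelling G1 ℓ)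
    (hr1 : ∀ x : V1, (G1.neighborSet x).ncard = δ1)
    (hr2 : ∀ i : V2, (G2.neighborSet i).ncard = δ2)
    (hd : Fintype.card V2 = δ1) (hδ2 : 1 ≤ δ2) (x0 : V1) [Nonempty V2] :
    IsRestrictedEdgeCut (replacementProduct G1 G2 ℓ) (Set.range (extEdge ℓ x0)) := by
  classical
  refine ⟨?_, ?_, ?_⟩
  · rintro e ⟨i, rfl⟩
    exact extEdge_mem_edgeSet hℓ hr1 hd x0 i
  · intro hcon
    obtain ⟨i0⟩ := ‹Nonempty V2›
    have hreach := hcon.preconnected (x0, i0) (ℓ x0 i0, i0)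
    have := trap_cloud hℓ hr1 hd x0 hreach rfl
    exact lab_ne hℓ x0 i0 this
  · rintro ⟨x, i⟩
    have hnb : (G2.neighborSet i).Nonempty :=
      nonempty_of_ncard_ne_zero (by rw [hr2]; omega)
    obtain ⟨j, hj⟩ := hnb
    refine ⟨(x, j), ?_⟩
    rw [SimpleGraph.deleteEdges_adj]
    refine ⟨Or.inl ⟨rfl, hj⟩, ?_⟩
    rintro ⟨k, hk⟩
    rw [extEdge, Sym2.eq_iff] at hk
    rcases hk with ⟨h1, h2⟩ | ⟨h1, h2⟩
    · exact lab_ne hℓ x0 k (((congrArg Prod.fst h1).trans (congrArg Prod.fst h2).symm).symm)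
    · exact lab_ne hℓ x0 k (((congrArg Prod.fst h2).trans (congrArg Prod.fst h1).symm))
  
/-- Cardinality bound for the lifted cut. -/
lemma ncard_lift_le (hℓ : IsRPLabelling G1 ℓ) (hr1 : ∀ x : V1, (G1.neighborSet x).ncard = δ1)
    (hd : Fintype.card V2 = δ1) {F1 : Set (Sym2 V1)} (hF1E : F1 ⊆ G1.edgeSet) :
    ({e ∈ (replacementProduct G1 G2 ℓ).edgeSet | Sym2.map Prod.fst e ∈ F1}).ncard ≤
      F1.ncard := by
  classical
  set Fl : Set (Sym2 (V1 × V2)) :=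
    {e ∈ (replacementProduct G1 G2 ℓ).edgeSet | Sym2.map Prod.fst e ∈ F1} with hFl
  have himg : Sym2.map Prod.fst '' Fl ⊆ F1 := by rintro e ⟨e', he', rfl⟩; exact he'.2
  have hex : ∀ c : Sym2 V1, ∃ x y, c = s(x, y) :=
    fun c => Sym2.ind (fun x y => ⟨x, y, rfl⟩) c
  have hinj : Set.InjOn (Sym2.map Prod.fst) Fl := by
    intro e1 h1 e2 h2 heq
    obtain ⟨x, y, hc⟩ := hex (Sym2.map Prod.fst e1)
    have hE : s(x, y) ∈ G1.edgeSet := hF1E (hc ▸ h1.2)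
    have hxy : G1.Adj x y := (G1.mem_edgeSet).1 hE
    obtain ⟨i, hi, he1⟩ := ext_edge_form hℓ hr1 hd h1.1 hxy hc
    obtain ⟨i', hi', he2⟩ := ext_edge_form hℓ hr1 hd h2.1 hxy (by rw [← heq]; exact hc)
    have : i = i' := hℓ.1 x (hi.trans hi'.symm)
    rw [he1, he2, this]
  calc Fl.ncard = (Sym2.map Prod.fst '' Fl).ncard := (ncard_image_of_injOn hinj).symm
    _ ≤ F1.ncard := ncard_le_ncard himg (toFinite _)

end RP4
end RPAux
namespace RPAux
section RP5
set_option linter.unusedSectionVars false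

open Set

variable {V1 V2 : Type*} [Fintype V1] [Fintype V2] {δ1 δ2 : ℕ}
  {G1 : SimpleGraph V1} {G2 : SimpleGraph V2} {ℓ : V1 → V2 → V1}

lemma card_V2_one (hc2 : G2.Connected) (hr2 : ∀ i : V2, (G2.neighborSet i).ncard = δ2)
    (hδ0 : δ2 = 0) : Fintype.card V2 = 1 := by
  haveI := hc2.nonempty
  have hsub : ∀ i j : V2, i = j := by
    intro i j
    obtain ⟨w⟩ := hc2.preconnected i j
    cases w with
    | nil => rfl
    | cons h _ =>
      exfalso
      have hmem := (h : G2.Adj i _)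
      have hmem' : _ ∈ G2.neighborSet i := hmem
      have hz : (G2.neighborSet i).ncard = 0 := by rw [hr2]; omega
      rw [ncard_eq_zero (toFinite _)] at hz
      rw [hz] at hmem'
      exact hmem'
  have h1 := Fintype.card_le_one_iff.2 hsub
  have h2 : 0 < Fintype.card V2 := Fintype.card_pos
  omega

end RP5
end RPAux

open RPAux in
set_option maxHeartbeats 1000000 in
/-- Theorem 4.6 (b). Let `G1` be a connected `δ1`-regular graph and `G2`
a connected `δ2`-regular graph on `δ1` vertices. If `G2` is `λ'`-optimal and either
`κ1 ≥ λ1 - λ2 + 1 ≥ 2` or `κ1 ≥ λ2 + 1`, then `G1 ® G2` is super-λ iff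
`λ1 > δ2 + 1`. -/
theorem replacementProduct_superLambda_iff
    {V1 V2 : Type*} [Fintype V1] [Fintype V2] {δ1 δ2 : ℕ}
    (G1 : SimpleGraph V1) (G2 : SimpleGraph V2) (ℓ : V1 → V2 → V1)
    (hℓ : IsRPLabelling G1 ℓ)
    (hc1 : G1.Connected) (hc2 : G2.Connected)
    (hr1 : ∀ x : V1, (G1.neighborSet x).ncard = δ1)
    (hr2 : ∀ i : V2, (G2.neighborSet i).ncard = δ2)
    (hd : Fintype.card V2 = δ1)
    (hopt : LambdaPrimeOptimal G2)
    (hκ : (edgeConn G1 + 1 ≤ vertexConn G1 + edgeConn G2 ∧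
        edgeConn G2 + 1 ≤ edgeConn G1) ∨
      edgeConn G2 + 1 ≤ vertexConn G1) :
    SuperLambda (replacementProduct G1 G2 ℓ) ↔ δ2 + 1 < edgeConn G1 := by
  classical
  haveI : Nonempty V1 := hc1.nonempty
  haveI : Nonempty V2 := hc2.nonempty
  set R := replacementProduct G1 G2 ℓ with hRdef
  obtain ⟨i0⟩ := hc2.nonempty
  obtain ⟨x0⟩ := hc1.nonempty
  have hdeg : ∀ p : V1 × V2, (R.neighborSet p).ncard = δ2 + 1 := by
    rintro ⟨x, i⟩; exact ncard_neighborSet_R hℓ hr1 hr2 hd x i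
  have hx0ne : (ℓ x0 i0, partner ℓ x0 i0) ≠ (x0, i0) := by
    intro h; exact lab_ne hℓ x0 i0 (congrArg Prod.fst h)
  have hup : edgeConn R ≤ δ2 + 1 := by
    have := edgeConn_le_degree R (x0, i0) _ hx0ne
    rwa [hdeg] at this
  have hlam1d : edgeConn G1 ≤ δ1 := by
    have := edgeConn_le_degree G1 x0 (ℓ x0 i0) (lab_ne hℓ x0 i0)
    rwa [hr1] at this
  constructor
  · -- forward, by contraposition
    intro hsup
    have hsup' : edgeConn R < restrictedEdgeConn R := hsup
    by_contra hle
    push_neg at hle   -- edgeConn G1 ≤ δ2 + 1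
    rcases Nat.eq_zero_or_pos δ2 with hδ0 | hδpos
    · -- δ2 = 0 : R has no restricted edge-cut at all
      have hcV2 : Fintype.card V2 = 1 := card_V2_one hc2 hr2 hδ0
      have hδ11 : δ1 = 1 := by omega
      have hcV1 : Fintype.card V1 ≤ 2 :=
        card_le_two_of_one_regular hc1 (fun x => by rw [hr1, hδ11])
      have hcR : Fintype.card (V1 × V2) ≤ 2 := by
        rw [Fintype.card_prod, hcV2, mul_one]; exact hcV1
      have hnone : ∀ Fr : Set (Sym2 (V1 × V2)), ¬ IsRestrictedEdgeCut R Fr := by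
        rintro Fr ⟨hFrE, hFrd, hFriso⟩
        have hnp : ¬ (R.deleteEdges Fr).Preconnected := fun hp =>
          hFrd (((R.deleteEdges Fr).connected_iff).2 ⟨hp, inferInstance⟩)
        rw [SimpleGraph.Preconnected] at hnp; push_neg at hnp
        obtain ⟨p, q, hpq⟩ := hnp
        have hpqne : p ≠ q := fun h => hpq (h ▸ SimpleGraph.Reachable.refl p)
        obtain ⟨wv, hw⟩ := hFriso p
        have hwp : wv ≠ p := hw.ne'
        by_cases hwq : wv = q
        · exact hpq (hwq ▸ hw.reachable)
        · have h3 : ({p, q, wv} : Finset (V1 × V2)).card = 3 := by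
            rw [Finset.card_insert_of_notMem (by simp [hpqne, Ne.symm hwp]),
              Finset.card_insert_of_notMem
                (by simp only [Finset.mem_singleton]; exact fun h => hwq h.symm),
              Finset.card_singleton]
          have hle3 := Finset.card_le_univ ({p, q, wv} : Finset (V1 × V2))
          rw [h3] at hle3
          omega
      have hr0 : restrictedEdgeConn R = 0 := by
        unfold restrictedEdgeConn
        convert Nat.sInf_empty
        rw [Set.eq_empty_iff_forall_notMem]
        rintro k ⟨Fr, hrc, -⟩
        exact hnone Fr hrc
      omega
    · -- δ2 ≥ 1 : the lifted minimum cut of G1 is a restricted cut of size λ1 ≤ λ(R)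
      have hlamR : edgeConn G1 ≤ edgeConn R := by
        by_contra hlt
        push_neg at hlt
        obtain ⟨FR, hE, hcard, hdis⟩ := edgeConn_witness R (x0, i0) _ hx0ne
        apply hdis
        refine key_connected hℓ hc1 hc2 hr1 hr2 hd hopt hκ FR hE ?_ ?_ ?_
        · omega
        · omega
        · intro p
          apply exists_adj_deleteEdges_of_ncard_lt
          rw [hdeg]
          omega
      obtain ⟨F1, hF1E, hF1c, hF1d⟩ := edgeConn_witness G1 x0 (ℓ x0 i0) (lab_ne hℓ x0 i0)
      have hrc : IsRestrictedEdgeCut R {e ∈ R.edgeSet | Sym2.map Prod.fst e ∈ F1} := by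
        refine ⟨fun e he => he.1, ?_, ?_⟩
        · intro hcon
          have hnp : ¬ (G1.deleteEdges F1).Preconnected := by
            intro hp
            exact hF1d (((G1.deleteEdges F1).connected_iff).2 ⟨hp, ‹Nonempty V1›⟩)
          rw [SimpleGraph.Preconnected] at hnp
          push_neg at hnp
          obtain ⟨a, b, hab⟩ := hnp
          exact hab (project_reach (hcon.preconnected (a, i0) (b, i0)))
        · rintro ⟨x, i⟩
          have hnb : (G2.neighborSet i).Nonempty :=
            Set.nonempty_of_ncard_ne_zero (by rw [hr2]; omega)
          obtain ⟨j, hj⟩ := hnb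
          refine ⟨(x, j), ?_⟩
          rw [SimpleGraph.deleteEdges_adj]
          refine ⟨Or.inl ⟨rfl, hj⟩, ?_⟩
          rintro ⟨-, hmem⟩
          rw [Sym2.map_pair_eq] at hmem
          exact G1.irrefl ((G1.mem_edgeSet).1 (hF1E hmem))
      have hlef : restrictedEdgeConn R ≤ F1.ncard :=
        (restrictedEdgeConn_le R hrc).trans (ncard_lift_le hℓ hr1 hd hF1E)
      rw [hF1c] at hlef
      omega
  · -- backward
    intro hgt
    have hδ2pos : 1 ≤ δ2 := by
      by_contra h0
      push_neg at h0
      have hδ0 : δ2 = 0 := by omega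
      have hcV2 : Fintype.card V2 = 1 := card_V2_one hc2 hr2 hδ0
      omega
    have hne : {k | ∃ F : Set (Sym2 (V1 × V2)), IsRestrictedEdgeCut R F ∧
        F.ncard = k}.Nonempty :=
      ⟨(Set.range (extEdge ℓ x0)).ncard, Set.range (extEdge ℓ x0),
        cloud_cut_restricted hℓ hr1 hr2 hd hδ2pos x0, rfl⟩
    obtain ⟨Fr, hrc, hcard⟩ := Nat.sInf_mem hne
    have hcard' : Fr.ncard = restrictedEdgeConn R := hcard
    have hlow : δ2 + 2 ≤ restrictedEdgeConn R := by
      by_contra hlt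
      push_neg at hlt
      apply hrc.2.1
      refine key_connected hℓ hc1 hc2 hr1 hr2 hd hopt hκ Fr hrc.1 ?_ ?_ hrc.2.2
      · omega
      · omega
    show edgeConn R < restrictedEdgeConn R
    omega
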